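/- Douglas-type factorisation in a von Neumann algebra: let M be a von Neumann algebra on a complex Hilbert space H, let a, b ∈ M, and let λ ≥ 0. Then there exists c ∈ M with ‖c‖ ≤ λ and a = c · b if and only if a* a ≤ λ² · (b* b). -/

import Mathlib

open ContinuousLinearMap RCLike

section DouglasAux

variable {H : Type*} [NormedAddCommGroup H] [InnerProductSpace ℂ H] [CompleteSpace H]

local notation "⟪" x ", " y "⟫" => @inner ℂ _ _ x y

lemma douglas_le_iff_norm (a b : H →L[ℂ] H) (l : ℝ) (hl : 0 ≤ l) :
    star a * a ≤ ((l : ℂ) ^ 2) • (star b * b) ↔ ∀ ξ, ‖a ξ‖ ≤ l * ‖b ξ‖ := by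
  have hval : ∀ ξ : H, (((l : ℂ) ^ 2) • (star b * b) - star a * a).reApplyInnerSelf ξ
      = l ^ 2 * ‖b ξ‖ ^ 2 - ‖a ξ‖ ^ 2 := by
    intro ξ
    have h1 : ⟪(star a * a) ξ, ξ⟫ = ⟪a ξ, a ξ⟫ := by
      simp [ContinuousLinearMap.mul_apply, star_eq_adjoint, adjoint_inner_left]
    have h2 : ⟪(star b * b) ξ, ξ⟫ = ⟪b ξ, b ξ⟫ := by
      simp [ContinuousLinearMap.mul_apply, star_eq_adjoint, adjoint_inner_left]
    simp only [reApplyInnerSelf_apply, ContinuousLinearMap.sub_apply,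
      ContinuousLinearMap.smul_apply, inner_sub_left, inner_smul_left, h1, h2,
      inner_self_eq_norm_sq_to_K]
    simp [← Complex.ofReal_pow]
  constructor
  · intro h ξ
    have hp := (ContinuousLinearMap.le_def _ _).mp h
    have := hp.2 ξ
    rw [hval ξ] at this
    have h2 : ‖a ξ‖ ^ 2 ≤ (l * ‖b ξ‖) ^ 2 := by nlinarith
    exact (pow_le_pow_iff_left₀ (norm_nonneg _) (by positivity) two_ne_zero).mp h2
  · intro h
    rw [ContinuousLinearMap.le_def]
    constructor
    · have hst : star ((l : ℂ) ^ 2) = ((l : ℂ) ^ 2) := by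
        rw [Complex.star_def]
        simp [Complex.ext_iff]
      apply IsSelfAdjoint.isSymmetric
      rw [IsSelfAdjoint]
      simp only [star_sub, star_smul, star_mul, star_star, hst]
    · intro ξ
      rw [hval ξ]
      have := h ξ
      nlinarith [norm_nonneg (a ξ), norm_nonneg (b ξ)]

lemma douglas_exists (M : VonNeumannAlgebra H) (a b : H →L[ℂ] H) (ha : a ∈ M) (hb : b ∈ M)
    (l : ℝ) (hl : 0 ≤ l) (hab : ∀ ξ, ‖a ξ‖ ≤ l * ‖b ξ‖) :
    ∃ c : H →L[ℂ] H, c ∈ M ∧ ‖c‖ ≤ l ∧ a = c * b := by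
  classical
  have hw : ∀ ξ η : H, b ξ = b η → a ξ = a η := by
    intro ξ η h
    have h2 := hab (ξ - η)
    rw [map_sub, map_sub, h, sub_self, norm_zero, mul_zero] at h2
    exact sub_eq_zero.mp (norm_le_zero_iff.mp h2)
  set R : Submodule ℂ H := LinearMap.range (b : H →ₗ[ℂ] H) with hRdef
  have hmem : ∀ ξ : H, b ξ ∈ R := fun ξ => LinearMap.mem_range_self (b : H →ₗ[ℂ] H) ξ
  obtain ⟨f0, hf0⟩ : ∃ f0 : R →ₗ[ℂ] H, ∀ (ξ : H) (h : b ξ ∈ R), f0 ⟨b ξ, h⟩ = a ξ := by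
    have key : ∀ y : R, b (LinearMap.mem_range.mp y.2).choose = (y : H) :=
      fun y => (LinearMap.mem_range.mp y.2).choose_spec
    refine ⟨{ toFun := fun y => a (LinearMap.mem_range.mp y.2).choose,
              map_add' := fun y z => ?_, map_smul' := fun r y => ?_ }, fun ξ h => ?_⟩
    · rw [← map_add]
      exact hw _ _ (by rw [key (y + z), map_add, key y, key z, Submodule.coe_add])
    · rw [RingHom.id_apply, ← map_smul]
      exact hw _ _ (by rw [key (r • y), map_smul, key y, Submodule.coe_smul])
    · exact hw _ _ (key ⟨b ξ, h⟩)
  have hf0b : ∀ y : R, ‖f0 y‖ ≤ l * ‖y‖ := by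
    rintro ⟨y, hy⟩
    obtain ⟨ξ, rfl⟩ := LinearMap.mem_range.mp hy
    rw [show f0 ⟨(b : H →ₗ[ℂ] H) ξ, hy⟩ = a ξ from hf0 ξ hy]
    calc ‖a ξ‖ ≤ l * ‖b ξ‖ := hab ξ
      _ = l * ‖(⟨b ξ, hy⟩ : R)‖ := by rw [Submodule.coe_norm]
  let f1 : R →L[ℂ] H := f0.mkContinuous l hf0b
  have hf1 : ∀ (ξ : H) (h : b ξ ∈ R), f1 ⟨b ξ, h⟩ = a ξ := fun ξ h => hf0 ξ h
  have hf1n : ‖f1‖ ≤ l := LinearMap.mkContinuous_norm_le f0 hl hf0b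
  set K : Submodule ℂ H := R.topologicalClosure with hKdef
  haveI : CompleteSpace K := (R.isClosed_topologicalClosure).completeSpace_coe
  have hsub : R ≤ K := R.le_topologicalClosure
  let e : R →L[ℂ] K := (Submodule.inclusion hsub).mkContinuous 1 (fun y => by
      rw [one_mul, Submodule.coe_norm, Submodule.coe_norm, Submodule.coe_inclusion])
  have he_coe : ∀ y : R, ((e y : K) : H) = (y : H) := fun y => rfl
  have he_norm : ∀ y : R, ‖e y‖ = ‖y‖ := fun y => by
    rw [Submodule.coe_norm, Submodule.coe_norm, he_coe]
  have h_e : IsUniformInducing e :=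
    (AddMonoidHomClass.isometry_of_norm e he_norm).isUniformInducing
  have h_dense : DenseRange e := by
    refine Topology.IsInducing.subtypeVal.dense_iff.2 fun x => ?_
    convert show (x : H) ∈ closure (R : Set H) from by
      simpa only [← Submodule.topologicalClosure_coe] using x.2
    rw [← Set.range_comp]
    refine Set.ext fun y => ⟨?_, fun hy => ⟨⟨y, hy⟩, rfl⟩⟩
    rintro ⟨z, rfl⟩
    exact z.2
  let g : K →L[ℂ] H := f1.extend e
  have hg_norm : ‖g‖ ≤ l := by
    have h1 : ∀ y : R, ‖y‖ ≤ ((1 : NNReal) : ℝ) * ‖e y‖ := fun y => by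
      rw [he_norm]; simp
    have h2 := f1.opNorm_extend_le h_dense h1
    rw [NNReal.coe_one, one_mul] at h2
    exact le_trans h2 hf1n
  let P : H →L[ℂ] K := Submodule.orthogonalProjection K
  let c : H →L[ℂ] H := g.comp P
  have hcb : ∀ ξ, c (b ξ) = a ξ := by
    intro ξ
    have hbK : b ξ ∈ K := hsub (hmem ξ)
    have h1 : P (b ξ) = e ⟨b ξ, hmem ξ⟩ := by
      apply Subtype.ext
      rw [he_coe]
      exact (Submodule.starProjection_eq_self_iff (K := K)).mpr hbK
    show g (P (b ξ)) = a ξ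
    rw [h1]
    exact (ContinuousLinearMap.extend_eq f1 h_dense h_e ⟨b ξ, hmem ξ⟩).trans (hf1 ξ (hmem ξ))
  have hceq : a = c * b := by ext ξ; exact (hcb ξ).symm
  have hcn : ‖c‖ ≤ l := by
    calc ‖c‖ ≤ ‖g‖ * ‖P‖ := opNorm_comp_le _ _
      _ ≤ l * 1 := mul_le_mul hg_norm (Submodule.orthogonalProjection_norm_le K) (norm_nonneg P) hl
      _ = l := mul_one l
  have hKperp0 : ∀ ξ ∈ Kᗮ, c ξ = 0 := by
    intro ξ hξ
    show g (P ξ) = 0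
    rw [show P ξ = 0 from Submodule.orthogonalProjectionOnto_apply_of_mem_orthogonal hξ,
      map_zero]
  -- membership in M
  have hxK : ∀ z ∈ M.commutant, ∀ ξ ∈ K, z ξ ∈ K := by
    intro z hz
    have hzb : b * z = z * b := VonNeumannAlgebra.mem_commutant_iff.mp hz b hb
    have hclosed : IsClosed {η : H | z η ∈ K} :=
      (R.isClosed_topologicalClosure).preimage z.continuous
    have hRsub : (R : Set H) ⊆ {η : H | z η ∈ K} := by
      intro η hη
      obtain ⟨σ, rfl⟩ := LinearMap.mem_range.mp hη
      show z (b σ) ∈ K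
      have h3 : z (b σ) = b (z σ) := by
        have h4 := congrFun (congrArg (DFunLike.coe) hzb) σ
        simpa only [ContinuousLinearMap.mul_apply] using h4.symm
      rw [h3]
      exact hsub (hmem (z σ))
    have h5 : (K : Set H) ⊆ {η : H | z η ∈ K} := by
      have : (K : Set H) = closure (R : Set H) := Submodule.topologicalClosure_coe R
      rw [this]
      exact closure_minimal hRsub hclosed
    exact fun ξ hξ => h5 hξ
  have hmemM : c ∈ M := by
    rw [← M.commutant_commutant, VonNeumannAlgebra.mem_commutant_iff]
    intro x hx
    have hxa : a * x = x * a := VonNeumannAlgebra.mem_commutant_iff.mp hx a ha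
    have hxb : b * x = x * b := VonNeumannAlgebra.mem_commutant_iff.mp hx b hb
    have hxs : star x ∈ M.commutant := star_mem hx
    have hxKp : ∀ ξ ∈ Kᗮ, x ξ ∈ Kᗮ := by
      intro ξ hξ
      rw [Submodule.mem_orthogonal]
      intro u hu
      have h6 : ⟪u, x ξ⟫ = ⟪(star x) u, ξ⟫ := by
        rw [star_eq_adjoint, adjoint_inner_left]
      rw [h6]
      exact (Submodule.mem_orthogonal K ξ).mp hξ _ (hxK (star x) hxs u hu)
    have hcommK : ∀ ξ ∈ K, x (c ξ) = c (x ξ) := by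
      have hclosed : IsClosed {η : H | x (c η) = c (x η)} :=
        isClosed_eq (x.continuous.comp c.continuous) (c.continuous.comp x.continuous)
      have hRsub : (R : Set H) ⊆ {η : H | x (c η) = c (x η)} := by
        intro η hη
        obtain ⟨σ, rfl⟩ := LinearMap.mem_range.mp hη
        show x (c (b σ)) = c (x (b σ))
        have hxbσ : x (b σ) = b (x σ) := by
          have h4 := congrFun (congrArg (DFunLike.coe) hxb) σ
          simpa only [ContinuousLinearMap.mul_apply] using h4.symm
        have hxaσ : x (a σ) = a (x σ) := by
          have h4 := congrFun (congrArg (DFunLike.coe) hxa) σ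
          simpa only [ContinuousLinearMap.mul_apply] using h4.symm
        rw [hcb σ, hxbσ, hcb (x σ), hxaσ]
      have h5 : (K : Set H) ⊆ {η : H | x (c η) = c (x η)} := by
        have : (K : Set H) = closure (R : Set H) := Submodule.topologicalClosure_coe R
        rw [this]
        exact closure_minimal hRsub hclosed
      exact fun ξ hξ => h5 hξ
    ext ξ
    rw [ContinuousLinearMap.mul_apply, ContinuousLinearMap.mul_apply]
    set k : H := (Submodule.orthogonalProjection K ξ : H) with hkdef
    set p : H := ξ - k with hpdef
    have hk : k ∈ K := (Submodule.orthogonalProjection K ξ).2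
    have hp : p ∈ Kᗮ := Submodule.sub_starProjection_mem_orthogonal ξ
    have hξ : ξ = k + p := by rw [hpdef]; abel
    rw [hξ]
    calc x (c (k + p)) = x (c k) := by rw [map_add, hKperp0 p hp, add_zero]
      _ = c (x k) := hcommK k hk
      _ = c (x k) + c (x p) := by rw [hKperp0 (x p) (hxKp p hp), add_zero]
      _ = c (x (k + p)) := by rw [← map_add, ← map_add]
  exact ⟨c, hmemM, hcn, hceq⟩

end DouglasAux

/-- **Douglas-type factorisation** in a von Neumann algebra: for `a, b` in a von Neumann
algebra `M` on a complex Hilbert space `H` and `0 ≤ l`, there is `c ∈ M` with `‖c‖ ≤ l` and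
`a = c * b` if and only if `a* a ≤ l² (b* b)`. -/
theorem vonNeumannAlgebra_douglas_factorisation
    {H : Type*} [NormedAddCommGroup H] [InnerProductSpace ℂ H] [CompleteSpace H]
    (M : VonNeumannAlgebra H) (a b : H →L[ℂ] H) (ha : a ∈ M) (hb : b ∈ M)
    (l : ℝ) (hl : 0 ≤ l) :
    (∃ c : H →L[ℂ] H, c ∈ M ∧ ‖c‖ ≤ l ∧ a = c * b) ↔
      star a * a ≤ ((l : ℂ) ^ 2) • (star b * b) := by
  rw [douglas_le_iff_norm a b l hl]
  constructor
  · rintro ⟨c, hcM, hcl, rfl⟩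
    intro ξ
    rw [ContinuousLinearMap.mul_apply]
    calc ‖c (b ξ)‖ ≤ ‖c‖ * ‖b ξ‖ := le_opNorm c (b ξ)
      _ ≤ l * ‖b ξ‖ := mul_le_mul_of_nonneg_right hcl (norm_nonneg _)
  · exact douglas_exists M a b ha hb l hl
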